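/- arXiv:1504.02757 — 7 statements merged into one kernel-verified Lean document; each statement's English description precedes it below -/
import Mathlib

section
/- Let p be an odd prime such that p + 2 is also prime (a twin prime pair), and let n = p(p+2). Then the quotient group G_n^* = (ℤ/nℤ)ˣ / ⟨-1⟩ is cyclic. -/
private lemma par_aux (c k : ℕ) (h1 : 2*c ∣ 2*k) (h2 : ¬ 2*c ∣ k) :
    k % 2 = c % 2 := by
  have hck : c ∣ k := (Nat.mul_dvd_mul_iff_left (by norm_num : 0 < 2)).mp h1
  obtain ⟨m, rfl⟩ := hck
  have hm : ¬ 2 ∣ m := by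
    rintro ⟨r, rfl⟩
    exact h2 ⟨r, by ring⟩
  have hm1 : m % 2 = 1 := by omega
  rw [Nat.mul_mod, hm1, mul_one, Nat.mod_mod_of_dvd _ dvd_rfl]

/-- Let `p` be an odd prime such that `p + 2` is also prime, and `n = p(p+2)`.
Then `(ℤ/nℤ)ˣ / ⟨-1⟩` is cyclic. -/
theorem stmt_8 (p : ℕ) (hp : p.Prime) (hpodd : Odd p) (hp2 : (p + 2).Prime)
    (n : ℕ) (hn : n = p * (p + 2)) :
    IsCyclic ((ZMod n)ˣ ⧸ Subgroup.zpowers (-1 : (ZMod n)ˣ)) := by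
  subst hn
  obtain ⟨c, rfl⟩ := hpodd
  set p := 2 * c + 1 with hpdef
  set q := p + 2 with hqdef
  have hc : 0 < c := by
    rcases Nat.eq_zero_or_pos c with h | h
    · subst h; norm_num [hpdef] at hp
    · exact h
  have hp3 : 2 < p := by omega
  have hq3 : 2 < q := by omega
  haveI : Fact p.Prime := ⟨hp⟩
  haveI : Fact q.Prime := ⟨hp2⟩
  haveI : Fact (2 < p) := ⟨hp3⟩
  haveI : Fact (2 < q) := ⟨hq3⟩
  haveI : NeZero (p * q) := ⟨by positivity⟩
  haveI : Fact (2 < p * q) := ⟨by nlinarith⟩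
  have hcop : Nat.Coprime p q := (Nat.coprime_primes hp hp2).mpr (by omega)
  -- the CRT equivalence on unit groups
  let e : (ZMod (p * q))ˣ ≃* (ZMod p)ˣ × (ZMod q)ˣ :=
    (Units.mapEquiv (ZMod.chineseRemainder hcop).toMulEquiv).trans MulEquiv.prodUnits
  obtain ⟨a, ha⟩ := IsCyclic.exists_generator (α := (ZMod p)ˣ)
  obtain ⟨b, hb⟩ := IsCyclic.exists_generator (α := (ZMod q)ˣ)
  have hoa : orderOf a = 2 * c := by
    rw [orderOf_eq_card_of_forall_mem_zpowers ha, Nat.card_eq_fintype_card,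
      ZMod.card_units_eq_totient, Nat.totient_prime hp]
    omega
  have hob : orderOf b = 2 * (c + 1) := by
    rw [orderOf_eq_card_of_forall_mem_zpowers hb, Nat.card_eq_fintype_card,
      ZMod.card_units_eq_totient, Nat.totient_prime hp2]
    omega
  set u := e.symm (a, b) with hudef
  have hou : orderOf u = 2 * (c * (c + 1)) := by
    rw [hudef, MulEquiv.orderOf_eq, Prod.orderOf_mk, hoa, hob,
      Nat.lcm_mul_left, Nat.Coprime.lcm_eq_mul (Nat.coprime_self_add_right.mpr (Nat.coprime_one_right c))]
  have step1 : (Units.mapEquiv (ZMod.chineseRemainder hcop).toMulEquiv) (-1) = -1 := by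
    apply Units.ext
    rw [Units.coe_mapEquiv]
    simp
  have step2 : MulEquiv.prodUnits (-1 : (ZMod p × ZMod q)ˣ) = (-1, -1) := by
    have c1 : (MulEquiv.prodUnits (-1 : (ZMod p × ZMod q)ˣ)).1
        = Units.map (MonoidHom.fst (ZMod p) (ZMod q)) (-1) := rfl
    have c2 : (MulEquiv.prodUnits (-1 : (ZMod p × ZMod q)ˣ)).2
        = Units.map (MonoidHom.snd (ZMod p) (ZMod q)) (-1) := rfl
    refine Prod.ext (Units.ext ?_) (Units.ext ?_)
    · rw [c1]
      simp only [Units.coe_map, MonoidHom.coe_fst, Units.val_neg, Units.val_one,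
        Prod.fst_neg, Prod.fst_one]
    · rw [c2]
      simp only [Units.coe_map, MonoidHom.coe_snd, Units.val_neg, Units.val_one,
        Prod.snd_neg, Prod.snd_one]
  have heneg : e (-1) = (-1, -1) := by
    show MulEquiv.prodUnits ((Units.mapEquiv (ZMod.chineseRemainder hcop).toMulEquiv) (-1))
      = (-1, -1)
    rw [step1, step2]
  -- no power of u equals -1
  have hnot : ∀ k : ℕ, u ^ k ≠ -1 := by
    intro k hk
    have hab : (a ^ k, b ^ k) = (-1, -1) := by
      have h := congrArg e hk
      rw [map_pow, hudef, e.apply_symm_apply, heneg] at h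
      rw [← h]
      exact Prod.ext (by rw [Prod.pow_fst]) (by rw [Prod.pow_snd])
    have hak : a ^ k = -1 := congrArg Prod.fst hab
    have hbk : b ^ k = -1 := congrArg Prod.snd hab
    have hne1p : (-1 : (ZMod p)ˣ) ≠ 1 := by
      intro h
      exact ZMod.neg_one_ne_one (n := p) (by simpa using congrArg Units.val h)
    have hne1q : (-1 : (ZMod q)ˣ) ≠ 1 := by
      intro h
      exact ZMod.neg_one_ne_one (n := q) (by simpa using congrArg Units.val h)
    have h1 : 2 * c ∣ 2 * k := by
      rw [← hoa]
      apply orderOf_dvd_of_pow_eq_one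
      rw [mul_comm, pow_mul, hak]
      exact neg_one_sq
    have h2 : ¬ 2 * c ∣ k := by
      rw [← hoa]
      intro h
      exact hne1p (by rw [← hak]; exact orderOf_dvd_iff_pow_eq_one.mp h)
    have h3 : 2 * (c + 1) ∣ 2 * k := by
      rw [← hob]
      apply orderOf_dvd_of_pow_eq_one
      rw [mul_comm, pow_mul, hbk]
      exact neg_one_sq
    have h4 : ¬ 2 * (c + 1) ∣ k := by
      rw [← hob]
      intro h
      exact hne1q (by rw [← hbk]; exact orderOf_dvd_iff_pow_eq_one.mp h)
    have e1 := par_aux c k h1 h2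
    have e2 := par_aux (c + 1) k h3 h4
    omega
  -- the order of the image of u in the quotient
  set H := Subgroup.zpowers (-1 : (ZMod (p * q))ˣ) with hHdef
  set v : (ZMod (p * q))ˣ ⧸ H := QuotientGroup.mk u with hvdef
  have hneg1 : (-1 : (ZMod (p * q))ˣ) ≠ 1 := by
    intro h
    exact ZMod.neg_one_ne_one (n := p * q) (by simpa using congrArg Units.val h)
  have hov : orderOf v = orderOf u := by
    rw [orderOf_eq_orderOf_iff]
    intro m
    constructor
    · intro hm
      rw [hvdef, ← QuotientGroup.mk_pow, QuotientGroup.eq_one_iff] at hm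
      obtain ⟨z, hz⟩ := hm
      have hz' : (-1 : (ZMod (p * q))ˣ) ^ z = u ^ m := hz
      rcases Int.even_or_odd z with hze | hzo
      · rw [hze.neg_one_zpow] at hz'
        exact hz'.symm
      · obtain ⟨w, rfl⟩ := hzo
        rw [zpow_add, zpow_one, Even.neg_one_zpow ⟨w, by ring⟩, one_mul] at hz'
        exact absurd hz'.symm (hnot m)
    · intro hm
      rw [hvdef, ← QuotientGroup.mk_pow, hm, QuotientGroup.mk_one]
  -- cardinalities
  have hcardG : Nat.card (ZMod (p * q))ˣ = 2 * (c * (c + 1)) * 2 := by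
    rw [Nat.card_eq_fintype_card, ZMod.card_units_eq_totient,
      Nat.totient_mul hcop, Nat.totient_prime hp, Nat.totient_prime hp2,
      show p - 1 = 2 * c by omega, show q - 1 = 2 * (c + 1) by omega]
    ring
  have hcardH : Nat.card H = 2 := by
    rw [hHdef, Nat.card_zpowers]
    exact orderOf_eq_prime neg_one_sq hneg1
  have hcardQ : Nat.card ((ZMod (p * q))ˣ ⧸ H) = 2 * (c * (c + 1)) := by
    have h := Subgroup.card_eq_card_quotient_mul_card_subgroup H
    rw [hcardG, hcardH] at h
    omega
  exact isCyclic_of_orderOf_eq_card v (by rw [hov, hou, hcardQ])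
end

section
/- Let p be an odd prime such that 2p + 1 is also prime (a Sophie Germain prime pair), and let n = p(2p+1). Then the quotient group G_n^* = (ℤ/nℤ)ˣ / ⟨-1⟩ is cyclic. -/
set_option maxHeartbeats 400000

lemma aux_mem_zpowers_neg_one {G : Type*} [Group G] [HasDistribNeg G] (x : G) :
    x ∈ Subgroup.zpowers (-1 : G) ↔ x = 1 ∨ x = -1 := by
  have h2 : (-1 : G) ^ (2 : ℤ) = 1 := by
    rw [zpow_two, neg_mul_neg, one_mul]
  constructor
  · rintro ⟨k, rfl⟩
    rcases Int.even_or_odd k with ⟨m, rfl⟩ | ⟨m, rfl⟩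
    · left
      show (-1 : G) ^ (m + m) = 1
      rw [← two_mul, zpow_mul, h2, one_zpow]
    · right
      show (-1 : G) ^ (2 * m + 1) = -1
      rw [zpow_add, zpow_mul, h2, one_zpow, zpow_one, one_mul]
  · rintro (rfl | rfl)
    · exact Subgroup.one_mem _
    · exact Subgroup.mem_zpowers _

lemma aux_prodUnits_neg_one {R S : Type*} [Ring R] [Ring S] :
    (MulEquiv.prodUnits (-1 : (R × S)ˣ)) = (-1, -1) := by
  refine Prod.ext (Units.ext ?_) (Units.ext ?_) <;>
    simp [MulEquiv.prodUnits, Units.coe_map]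

lemma aux_mapEquiv_neg_one {R S : Type*} [Ring R] [Ring S] (f : R ≃+* S) :
    Units.mapEquiv f.toMulEquiv (-1) = -1 := by
  ext
  rw [Units.coe_mapEquiv]
  simp

lemma aux_cyclic_prod {G H : Type*} [Group G] [Group H] [Finite G] [Finite H]
    [IsCyclic G] [IsCyclic H] (h : (Nat.card G).Coprime (Nat.card H)) :
    IsCyclic (G × H) := by
  obtain ⟨g, hg⟩ := IsCyclic.exists_ofOrder_eq_natCard (α := G)
  obtain ⟨k, hk⟩ := IsCyclic.exists_ofOrder_eq_natCard (α := H)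
  apply isCyclic_of_orderOf_eq_card (g, k)
  rw [Prod.orderOf_mk, hg, hk, Nat.Coprime.lcm_eq_mul h, Nat.card_prod]

/-- Let `p` be an odd prime such that `2p + 1` is also prime, and `n = p(2p+1)`.
Then `(ℤ/nℤ)ˣ / ⟨-1⟩` is cyclic. -/
theorem stmt_9 (p : ℕ) (hp : p.Prime) (hpodd : Odd p) (hsg : (2 * p + 1).Prime)
    (n : ℕ) (hn : n = p * (2 * p + 1)) :
    IsCyclic ((ZMod n)ˣ ⧸ Subgroup.zpowers (-1 : (ZMod n)ˣ)) := by
  subst hn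
  haveI : Fact p.Prime := ⟨hp⟩
  haveI : Fact (2 * p + 1).Prime := ⟨hsg⟩
  have hp2 : p ≠ 2 := fun h => by rw [h] at hpodd; exact absurd hpodd (by decide)
  have hp3 : 3 ≤ p := by
    have := hp.two_le; omega
  haveI : Fact (2 < 2 * p + 1) := ⟨by omega⟩
  have hpq : Nat.Coprime p (2 * p + 1) :=
    (Nat.coprime_primes hp hsg).mpr (by omega)
  -- CRT equivalence on units
  let e : (ZMod (p * (2 * p + 1)))ˣ ≃* (ZMod p)ˣ × (ZMod (2 * p + 1))ˣ :=
    (Units.mapEquiv (ZMod.chineseRemainder hpq).toMulEquiv).trans MulEquiv.prodUnits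
  have he : e (-1) = (-1, -1) := by
    show MulEquiv.prodUnits (Units.mapEquiv (ZMod.chineseRemainder hpq).toMulEquiv (-1)) =
      (-1, -1)
    rw [aux_mapEquiv_neg_one, aux_prodUnits_neg_one]
  -- the quadratic character hom
  let θ : (ZMod (2 * p + 1))ˣ →* (ZMod p)ˣ :=
    (Units.map (Int.castRingHom (ZMod p)).toMonoidHom).comp
      (quadraticChar (ZMod (2 * p + 1))).toUnitHom
  have hsq : ¬ IsSquare (-1 : ZMod (2 * p + 1)) := by
    rw [ZMod.exists_sq_eq_neg_one_iff]
    obtain ⟨k, rfl⟩ := hpodd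
    omega
  have hθ : θ (-1) = -1 := by
    have h1 : (quadraticChar (ZMod (2 * p + 1))).toUnitHom (-1) = (-1 : ℤˣ) := by
      ext
      rw [MulChar.coe_toUnitHom]
      simpa using quadraticChar_neg_one_iff_not_isSquare.mpr hsq
    simp only [θ, MonoidHom.comp_apply, h1]
    ext
    simp
  let ψ : (ZMod p)ˣ × (ZMod (2 * p + 1))ˣ →*
      (ZMod p)ˣ × ((ZMod (2 * p + 1))ˣ ⧸ Subgroup.zpowers (-1 : (ZMod (2 * p + 1))ˣ)) :=
    MonoidHom.prod
      ((MonoidHom.fst _ _) * (θ.comp (MonoidHom.snd _ _)))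
      ((QuotientGroup.mk' _).comp (MonoidHom.snd _ _))
  let Ψ := ψ.comp e.toMonoidHom
  have hmk : ∀ b : (ZMod (2 * p + 1))ˣ,
      (QuotientGroup.mk' (Subgroup.zpowers (-1 : (ZMod (2 * p + 1))ˣ))) b = 1 ↔
        b = 1 ∨ b = -1 := by
    intro b
    rw [← MonoidHom.mem_ker, QuotientGroup.ker_mk', aux_mem_zpowers_neg_one]
  have hker : Subgroup.zpowers (-1 : (ZMod (p * (2 * p + 1)))ˣ) = Ψ.ker := by
    ext x
    rw [aux_mem_zpowers_neg_one, MonoidHom.mem_ker]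
    constructor
    · rintro (rfl | rfl)
      · simp
      · show ψ (e (-1)) = 1
        rw [he]
        have h2 : (QuotientGroup.mk' (Subgroup.zpowers (-1 : (ZMod (2 * p + 1))ˣ)))
            (-1 : (ZMod (2 * p + 1))ˣ) = 1 := (hmk _).mpr (Or.inr rfl)
        simp [ψ, hθ, h2]
    · intro hx
      simp only [Ψ, ψ, MonoidHom.comp_apply, MonoidHom.prod_apply, MonoidHom.mul_apply,
        MonoidHom.coe_fst, MonoidHom.coe_snd, MulEquiv.coe_toMonoidHom,
        Prod.ext_iff, Prod.fst_one, Prod.snd_one] at hx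
      obtain ⟨h1, h2⟩ := hx
      rcases (hmk _).mp h2 with hb | hb
      · left
        apply e.injective
        rw [map_one]
        have : (e x).1 = 1 := by rw [hb, map_one, mul_one] at h1; exact h1
        exact Prod.ext this hb
      · right
        apply e.injective
        rw [he]
        have : (e x).1 = -1 := by
          rw [hb, hθ, mul_neg_one, neg_eq_iff_eq_neg] at h1
          rw [h1]
        exact Prod.ext this hb
  rw [hker]
  -- the codomain is cyclic
  have hcardq : Nat.card ((ZMod (2 * p + 1))ˣ ⧸
      Subgroup.zpowers (-1 : (ZMod (2 * p + 1))ˣ)) = p := by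
    have horder : orderOf (-1 : (ZMod (2 * p + 1))ˣ) = 2 := by
      apply orderOf_eq_prime
      · exact neg_one_sq
      · rw [Ne, Units.ext_iff]
        exact ZMod.neg_one_ne_one
    have hcard : Nat.card (ZMod (2 * p + 1))ˣ = 2 * p := by
      rw [Nat.card_eq_fintype_card, ZMod.card_units_eq_totient,
        Nat.totient_prime hsg]
      omega
    have := Subgroup.card_eq_card_quotient_mul_card_subgroup
      (Subgroup.zpowers (-1 : (ZMod (2 * p + 1))ˣ))
    rw [hcard, Nat.card_zpowers, horder] at this
    omega
  haveI : IsCyclic ((ZMod (2 * p + 1))ˣ ⧸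
      Subgroup.zpowers (-1 : (ZMod (2 * p + 1))ˣ)) :=
    isCyclic_of_surjective _ (QuotientGroup.mk'_surjective _)
  haveI : IsCyclic ((ZMod p)ˣ ×
      ((ZMod (2 * p + 1))ˣ ⧸ Subgroup.zpowers (-1 : (ZMod (2 * p + 1))ˣ))) := by
    apply aux_cyclic_prod
    rw [hcardq, Nat.card_eq_fintype_card, ZMod.card_units_eq_totient,
      Nat.totient_prime hp]
    exact Nat.Coprime.symm ((Nat.Prime.coprime_iff_not_dvd hp).mpr
      (fun h => absurd (Nat.le_of_dvd (by omega) h) (by omega)))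
  haveI hrange : IsCyclic (Ψ.range) := Subgroup.isCyclic _
  let E := QuotientGroup.quotientKerEquivRange Ψ
  exact isCyclic_of_surjective E.symm E.symm.surjective
end

section
/- Let n = p^α be a power of an odd prime such that 4 divides φ(n) and φ(n)/4 is odd. Let b be an integer coprime to n which is a quadratic residue modulo* n, i.e., b ≡ c² (mod n) or b ≡ -c² (mod n) for some integer c. Then x = b^{(φ(n)/4 + 1)/2} satisfies x² ≡ b (mod n) or x² ≡ -b (mod n). -/
lemma aux_sqrt_one (p : ℕ) (hp : p.Prime) (hpodd : Odd p) (α : ℕ) (x : ℤ)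
    (h : ((p : ℤ)) ^ α ∣ x ^ 2 - 1) :
    ((p : ℤ)) ^ α ∣ x - 1 ∨ ((p : ℤ)) ^ α ∣ x + 1 := by
  have hpi : Prime (p : ℤ) := Nat.prime_iff_prime_int.mp hp
  have hfact : x ^ 2 - 1 = (x - 1) * (x + 1) := by ring
  rw [hfact] at h
  by_cases hd : (p : ℤ) ∣ x - 1
  · left
    have hnd : ¬ (p : ℤ) ∣ x + 1 := by
      intro hd2
      have : (p : ℤ) ∣ 2 := by
        have := dvd_sub hd2 hd
        simpa using this
      have h2 : (p : ℤ) ≤ 2 := Int.le_of_dvd (by norm_num) this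
      have : 3 ≤ p := hp.two_le.lt_of_ne (by rintro rfl; exact (by norm_num : ¬ Odd 2) hpodd)
      omega
    have hcop : IsCoprime ((p : ℤ) ^ α) (x + 1) :=
      ((hpi.coprime_iff_not_dvd).mpr hnd).pow_left
    exact hcop.dvd_of_dvd_mul_right h
  · right
    have hcop : IsCoprime ((p : ℤ) ^ α) (x - 1) :=
      ((hpi.coprime_iff_not_dvd).mpr hd).pow_left
    exact hcop.dvd_of_dvd_mul_left h

lemma aux_modeq_coprime (n a d : ℤ) (h : a ≡ d [ZMOD n]) (ha : IsCoprime a n) :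
    IsCoprime d n := by
  obtain ⟨k, hk⟩ := Int.ModEq.dvd h
  have : d = a + n * k := by linarith
  rw [this]
  exact ha.add_mul_left_left k

lemma aux_euler (n : ℕ) (c : ℤ) (h : IsCoprime c (n : ℤ)) :
    c ^ n.totient ≡ 1 [ZMOD (n : ℤ)] := by
  obtain ⟨u, v, huv⟩ := h
  have hu : IsUnit ((c : ZMod n)) := by
    apply IsUnit.of_mul_eq_one ((u : ZMod n))
    have h1 : ((u * c + v * n : ℤ) : ZMod n) = ((1 : ℤ) : ZMod n) := by rw [huv]
    push_cast at h1
    simpa [ZMod.natCast_self, mul_comm] using h1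
  have h2 := ZMod.pow_totient hu.unit
  have h3 : ((c : ZMod n)) ^ n.totient = 1 := by
    have h4 := congrArg (Units.val) h2
    rw [Units.val_pow_eq_pow_val, hu.unit_spec, Units.val_one] at h4
    exact h4
  rw [← ZMod.intCast_eq_intCast_iff]
  push_cast
  simpa using h3

/-- Let `n = p^α` (p an odd prime, α ≥ 1) with `4 ∣ φ(n)` and `φ(n)/4` odd. Let `b` be
coprime to `n` and a quadratic residue modulo* `n`. Then `x = b^((φ(n)/4 + 1)/2)`
satisfies `x² ≡ b (mod n)` or `x² ≡ -b (mod n)`. -/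
theorem stmt_12 (p α : ℕ) (hp : p.Prime) (hpodd : Odd p) (hα : 0 < α)
    (n : ℕ) (hn : n = p ^ α) (hdvd : 4 ∣ n.totient) (hodd : Odd (n.totient / 4))
    (b : ℤ) (hb : IsCoprime b (n : ℤ))
    (hqr : ∃ c : ℤ, b ≡ c ^ 2 [ZMOD (n : ℤ)] ∨ b ≡ -c ^ 2 [ZMOD (n : ℤ)]) :
    (b ^ ((n.totient / 4 + 1) / 2)) ^ 2 ≡ b [ZMOD (n : ℤ)] ∨
      (b ^ ((n.totient / 4 + 1) / 2)) ^ 2 ≡ -b [ZMOD (n : ℤ)] := by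
  obtain ⟨c, hc⟩ := hqr
  set t := n.totient with ht
  set m := t / 4 with hm
  -- b^2 ≡ c^4
  have hb2 : b ^ 2 ≡ c ^ 4 [ZMOD (n : ℤ)] := by
    rcases hc with h | h
    · calc b ^ 2 ≡ (c ^ 2) ^ 2 [ZMOD (n : ℤ)] := h.pow 2
        _ = c ^ 4 := by ring
    · calc b ^ 2 ≡ (-c ^ 2) ^ 2 [ZMOD (n : ℤ)] := h.pow 2
        _ = c ^ 4 := by ring
  -- c coprime to n
  have hcop : IsCoprime c (n : ℤ) := by
    have h2 : IsCoprime (c ^ 2) (n : ℤ) := by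
      rcases hc with h | h
      · exact aux_modeq_coprime _ _ _ h hb
      · have := aux_modeq_coprime _ _ _ h hb
        exact (IsCoprime.neg_left_iff _ _).mp this
    exact (IsCoprime.pow_left_iff (by norm_num)).mp h2
  have h4m : 4 * m = t := Nat.mul_div_cancel' hdvd
  -- b^(2m) ≡ 1
  have hbt : b ^ (2 * m) ≡ 1 [ZMOD (n : ℤ)] := by
    calc b ^ (2 * m) = (b ^ 2) ^ m := by rw [← pow_mul]
      _ ≡ (c ^ 4) ^ m [ZMOD (n : ℤ)] := hb2.pow m
      _ = c ^ (4 * m) := by rw [← pow_mul]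
      _ = c ^ t := by rw [h4m]
      _ ≡ 1 [ZMOD (n : ℤ)] := aux_euler n c hcop
  -- b^m ≡ ±1
  have hkey : ((p : ℤ)) ^ α ∣ (b ^ m) ^ 2 - 1 := by
    have hd : (n : ℤ) ∣ 1 - b ^ (2 * m) := hbt.dvd
    have : (n : ℤ) ∣ (b ^ m) ^ 2 - 1 := by
      rw [← pow_mul, mul_comm m 2]
      exact (dvd_sub_comm).mp hd
    rwa [hn, Nat.cast_pow] at this
  have hn_eq : (n : ℤ) = ((p : ℤ)) ^ α := by rw [hn]; push_cast; ring
  have hbm : b ^ m ≡ 1 [ZMOD (n : ℤ)] ∨ b ^ m ≡ -1 [ZMOD (n : ℤ)] := by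
    rcases aux_sqrt_one p hp hpodd α (b ^ m) hkey with h | h
    · left
      rw [Int.modEq_iff_dvd, hn_eq]
      exact (dvd_sub_comm).mp h
    · right
      rw [Int.modEq_iff_dvd, hn_eq]
      have : -1 - b ^ m = -(b ^ m + 1) := by ring
      rw [this]
      exact dvd_neg.mpr h
  -- exponent arithmetic
  have he : 2 * ((m + 1) / 2) = m + 1 := by
    obtain ⟨k, hk⟩ := hodd
    omega
  have hfinal : (b ^ ((m + 1) / 2)) ^ 2 = b ^ m * b := by
    rw [← pow_mul, mul_comm, he, pow_succ]
  rcases hbm with h | h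
  · left
    rw [hfinal]
    calc b ^ m * b ≡ 1 * b [ZMOD (n : ℤ)] := h.mul_right b
      _ = b := by ring
  · right
    rw [hfinal]
    calc b ^ m * b ≡ (-1) * b [ZMOD (n : ℤ)] := h.mul_right b
      _ = -b := by ring
end

section
/- Let n = p^α be a power of an odd prime such that 8 divides φ(n) and φ(n)/8 is odd. Let b be an integer coprime to n which is a biquadratic residue modulo* n, i.e., b ≡ c⁴ (mod n) or b ≡ -c⁴ (mod n) for some integer c. Then x = b^{(φ(n)/8 + 1)/2} satisfies x² ≡ b (mod n) or x² ≡ -b (mod n). -/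
private lemma coprime_of_modEq' {a b n : ℤ} (h : a ≡ b [ZMOD n]) (ha : IsCoprime a n) :
    IsCoprime b n := by
  obtain ⟨k, hk⟩ := h.dvd
  have hb : b = a + n * k := by linarith
  rw [hb]
  exact ha.add_mul_left_left k

private lemma euler_int {n : ℕ} [NeZero n] {c : ℤ} (h : IsCoprime c (n : ℤ)) :
    c ^ n.totient ≡ 1 [ZMOD (n : ℤ)] := by
  obtain ⟨u, v, huv⟩ := h
  have hu : IsUnit (c : ZMod n) := by
    apply IsUnit.of_mul_eq_one ((u : ℤ) : ZMod n)
    have := congrArg (fun x : ℤ => (x : ZMod n)) huv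
    push_cast at this
    simp [ZMod.natCast_self] at this
    linear_combination this
  obtain ⟨w, hw⟩ := hu
  have := ZMod.pow_totient w
  have h2 : ((c : ZMod n)) ^ n.totient = 1 := by
    rw [← hw, ← Units.val_pow_eq_pow_val, this, Units.val_one]
  have h3 : ((c ^ n.totient : ℤ) : ZMod n) = ((1 : ℤ) : ZMod n) := by push_cast; simpa using h2
  exact (ZMod.intCast_eq_intCast_iff _ _ _).mp h3

private lemma pm_one_of_sq {p : ℕ} (hp : p.Prime) (hpodd : Odd p) (α : ℕ) {t : ℤ}
    (h : ((p : ℤ)) ^ α ∣ t ^ 2 - 1) :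
    ((p : ℤ)) ^ α ∣ t - 1 ∨ ((p : ℤ)) ^ α ∣ t + 1 := by
  have hfac : t ^ 2 - 1 = (t - 1) * (t + 1) := by ring
  rw [hfac] at h
  have hprime : Prime ((p : ℤ)) := Nat.prime_iff_prime_int.mp hp
  by_cases hd : ((p : ℤ)) ∣ t - 1
  · left
    have hnd : ¬ ((p : ℤ)) ∣ t + 1 := by
      intro hd2
      have : ((p : ℤ)) ∣ 2 := by
        have := dvd_sub hd2 hd
        simpa using this
      have hple : (p : ℤ) ≤ 2 := Int.le_of_dvd (by norm_num) this
      have hple' : p ≤ 2 := by exact_mod_cast hple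
      have h2le := hp.two_le
      obtain ⟨k, hk⟩ := hpodd
      omega
    have hcop : IsCoprime (((p : ℤ)) ^ α) (t + 1) :=
      (hprime.irreducible.coprime_iff_not_dvd.mpr hnd).pow_left
    exact hcop.dvd_of_dvd_mul_right h
  · right
    have hcop : IsCoprime (((p : ℤ)) ^ α) (t - 1) :=
      (hprime.irreducible.coprime_iff_not_dvd.mpr hd).pow_left
    exact hcop.dvd_of_dvd_mul_left h

/-- Let `n = p^α` (p an odd prime, α ≥ 1) with `8 ∣ φ(n)` and `φ(n)/8` odd. Let `b` be
coprime to `n` and a biquadratic residue modulo* `n`. Then `x = b^((φ(n)/8 + 1)/2)`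
satisfies `x² ≡ b (mod n)` or `x² ≡ -b (mod n)`. -/
theorem stmt_13 (p α : ℕ) (hp : p.Prime) (hpodd : Odd p) (hα : 0 < α)
    (n : ℕ) (hn : n = p ^ α) (hdvd : 8 ∣ n.totient) (hodd : Odd (n.totient / 8))
    (b : ℤ) (hb : IsCoprime b (n : ℤ))
    (hbqr : ∃ c : ℤ, b ≡ c ^ 4 [ZMOD (n : ℤ)] ∨ b ≡ -c ^ 4 [ZMOD (n : ℤ)]) :
    (b ^ ((n.totient / 8 + 1) / 2)) ^ 2 ≡ b [ZMOD (n : ℤ)] ∨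
      (b ^ ((n.totient / 8 + 1) / 2)) ^ 2 ≡ -b [ZMOD (n : ℤ)] := by
  have hnpos : 0 < n := by rw [hn]; exact pow_pos hp.pos α
  haveI : NeZero n := ⟨hnpos.ne'⟩
  set m := n.totient / 8 with hm
  have hm8 : n.totient = 8 * m := (Nat.mul_div_cancel' hdvd).symm
  obtain ⟨c, hc⟩ := hbqr
  -- coprimality of c
  have hcop : IsCoprime c (n : ℤ) := by
    have h4 : IsCoprime (c ^ 4) (n : ℤ) := by
      rcases hc with hc | hc
      · exact coprime_of_modEq' hc hb
      · have := coprime_of_modEq' hc hb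
        simpa using this.neg_left
    exact (IsCoprime.pow_left_iff (by norm_num)).mp h4
  -- t = c^(4m) satisfies t ≡ ±1
  set t : ℤ := c ^ (4 * m) with htdef
  have heuler : c ^ n.totient ≡ 1 [ZMOD (n : ℤ)] := euler_int hcop
  have hsq : (n : ℤ) ∣ t ^ 2 - 1 := by
    have : t ^ 2 = c ^ n.totient := by rw [htdef, ← pow_mul, hm8]; ring_nf
    rw [this]
    exact (Int.ModEq.dvd heuler.symm)
  have ht : t ≡ 1 [ZMOD (n : ℤ)] ∨ t ≡ -1 [ZMOD (n : ℤ)] := by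
    have hsq' : ((p : ℤ)) ^ α ∣ t ^ 2 - 1 := by
      rwa [hn, Nat.cast_pow] at hsq
    rcases pm_one_of_sq hp hpodd α hsq' with h | h
    · left
      have : (n : ℤ) ∣ t - 1 := by rw [hn]; push_cast; exact h
      exact (Int.modEq_iff_dvd.mpr (by simpa using this.neg_right.neg_left)).symm.symm
    · right
      have : (n : ℤ) ∣ t + 1 := by rw [hn]; push_cast; exact h
      exact Int.ModEq.symm (Int.modEq_iff_dvd.mpr (by simpa using this))
  -- b^m ≡ ±1
  have hbm : b ^ m ≡ 1 [ZMOD (n : ℤ)] ∨ b ^ m ≡ -1 [ZMOD (n : ℤ)] := by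
    obtain ⟨j, hj⟩ := hodd
    have hmodd : m = 2 * j + 1 := hj
    rcases hc with hc | hc
    · have h1 : b ^ m ≡ (c ^ 4) ^ m [ZMOD (n : ℤ)] := hc.pow m
      have h2 : (c ^ 4) ^ m = t := by rw [htdef, ← pow_mul]
      rw [h2] at h1
      rcases ht with ht | ht
      · exact Or.inl (h1.trans ht)
      · exact Or.inr (h1.trans ht)
    · have h1 : b ^ m ≡ (-c ^ 4) ^ m [ZMOD (n : ℤ)] := hc.pow m
      have hmOdd : Odd m := ⟨j, hj⟩
      have h2 : (-c ^ 4) ^ m = -t := by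
        rw [hmOdd.neg_pow, htdef, ← pow_mul]
      rw [h2] at h1
      rcases ht with ht | ht
      · exact Or.inr (h1.trans ht.neg)
      · exact Or.inl (h1.trans (by simpa using ht.neg))
  -- conclude
  obtain ⟨j, hj⟩ := hodd
  have hmj : m = 2 * j + 1 := hj
  have hpow : (b ^ ((m + 1) / 2)) ^ 2 = b ^ m * b := by
    rw [← pow_mul, ← pow_succ]
    congr 1
    omega
  rw [hpow]
  rcases hbm with h | h
  · left
    have := h.mul_right b
    simpa using this
  · right
    have := h.mul_right b
    simpa using this
end

section
/- Let n ≥ 3 be an odd integer and let Ψ_n be the minimal polynomial over ℚ of 2·cos(2π/n). Then, as polynomials over ℝ, Ψ_n(s) = ∏_{1 ≤ j ≤ (n-1)/2, gcd(j,n)=1} (s - 2·cos(2πj/n)); that is, the roots of Ψ_n are exactly the numbers 2·cos(2πj/n) with 1 ≤ j ≤ (n-1)/2 and j coprime to n, each occurring with multiplicity one. -/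
set_option maxHeartbeats 1000000
set_option synthInstance.maxHeartbeats 400000

lemma coprime_sub_iff {n a : ℕ} (h : a ≤ n) : Nat.Coprime (n - a) n ↔ Nat.Coprime a n := by
  rw [show Nat.Coprime (n - a) n ↔ Nat.Coprime (n - a) a from
      (by rw [← Nat.coprime_sub_self_right (Nat.sub_le n a), Nat.sub_sub_self h]),
    Nat.coprime_sub_self_left h, Nat.coprime_comm]

lemma card_half (n : ℕ) (hn : 3 ≤ n) (hodd : Odd n) :
    ((Finset.Icc 1 ((n - 1) / 2)).filter (fun j => Nat.Coprime j n)).card * 2 = n.totient := by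
  obtain ⟨k, hk⟩ := hodd
  have hk1 : 1 ≤ k := by omega
  have hm : (n - 1) / 2 = k := by omega
  set S := (Finset.Icc 1 ((n - 1) / 2)).filter (fun j => Nat.Coprime j n) with hS
  rw [Nat.totient_eq_card_coprime]
  have key : (Finset.range n).filter (fun a => n.Coprime a) = S ∪ S.image (fun j => n - j) := by
    ext a
    simp only [Finset.mem_filter, Finset.mem_range, Finset.mem_union, Finset.mem_image,
      Finset.mem_Icc, hS, hm]
    constructor
    · rintro ⟨ha, hc⟩
      have ha0 : a ≠ 0 := by
        rintro rfl
        rw [Nat.coprime_zero_right] at hc; omega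
      by_cases hak : a ≤ k
      · exact Or.inl ⟨⟨by omega, hak⟩, hc.symm⟩
      · refine Or.inr ⟨n - a, ⟨⟨by omega, by omega⟩, ?_⟩, by omega⟩
        exact (coprime_sub_iff (by omega)).2 hc.symm
    · rintro (⟨⟨h1, h2⟩, hc⟩ | ⟨j, ⟨⟨h1, h2⟩, hc⟩, rfl⟩)
      · exact ⟨by omega, hc.symm⟩
      · exact ⟨by omega, ((coprime_sub_iff (by omega)).2 hc).symm⟩
  rw [key, Finset.card_union_of_disjoint, Finset.card_image_of_injOn]
  · ring
  · intro x hx y hy hxy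
    simp only [hS, Finset.mem_coe, Finset.mem_filter, Finset.mem_Icc, hm] at hx hy
    have hxy' : n - x = n - y := hxy
    omega
  · rw [Finset.disjoint_left]
    intro a haS haI
    simp only [hS, Finset.mem_filter, Finset.mem_Icc, Finset.mem_image, hm] at haS haI
    obtain ⟨j, hj, rfl⟩ := haI
    omega

open Polynomial IntermediateField

lemma cos_exp_eq (θ : ℝ) :
    Complex.exp (θ * Complex.I) + (Complex.exp (θ * Complex.I))⁻¹
      = ((2 * Real.cos θ : ℝ) : ℂ) := by
  rw [← Complex.exp_neg]
  have h : -((θ : ℂ) * Complex.I) = ((-θ : ℝ) : ℂ) * Complex.I := by push_cast; ring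
  rw [h, Complex.exp_mul_I, Complex.exp_mul_I]
  push_cast [Complex.cos_neg, Complex.sin_neg, Complex.ofReal_cos, Complex.ofReal_sin]
  ring

lemma master (n : ℕ) (hn : 3 ≤ n) :
    (minpoly ℚ (2 * Real.cos (2 * Real.pi / n))).natDegree * 2 = n.totient ∧
    ∀ j : ℕ, Nat.Coprime j n →
      Polynomial.aeval (2 * Real.cos (2 * Real.pi * j / n) : ℝ)
        (minpoly ℚ (2 * Real.cos (2 * Real.pi / n))) = 0 := by
  have hn0 : (n : ℕ) ≠ 0 := by omega
  set N : ℕ+ := ⟨n, by omega⟩ with hN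
  set K := CyclotomicField N ℚ with hK
  haveI : NeZero (N : ℕ) := ⟨N.ne_zero⟩
  haveI : NeZero n := ⟨hn0⟩
  haveI : IsCyclotomicExtension {(N : ℕ)} ℚ K :=
    CyclotomicField.isCyclotomicExtension _ _
  set ζK := IsCyclotomicExtension.zeta N ℚ K with hzK
  have hζK := IsCyclotomicExtension.zeta_spec N ℚ K
  have hζKn : IsPrimitiveRoot ζK n := hζK
  have hirr : Irreducible (Polynomial.cyclotomic ((N : ℕ)) ℚ) :=
    Polynomial.cyclotomic.irreducible_rat N.pos
  set ζ : ℂ := Complex.exp (2 * Real.pi * Complex.I / n) with hz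
  have hζ : IsPrimitiveRoot ζ n := Complex.isPrimitiveRoot_exp n hn0
  -- the embeddings
  have hφ : ∀ j : ℕ, Nat.Coprime j n → ∃ φ : K →ₐ[ℚ] ℂ, φ ζK = ζ ^ j := by
    intro j hj
    have hprim : ζ ^ j ∈ primitiveRoots n ℂ :=
      (mem_primitiveRoots (k := n) (by omega)).2 (hζ.pow_of_coprime j hj)
    refine ⟨(hζK.embeddingsEquivPrimitiveRoots ℂ hirr).symm ⟨ζ ^ j, hprim⟩, ?_⟩
    have := (hζK.embeddingsEquivPrimitiveRoots ℂ hirr).apply_symm_apply ⟨ζ ^ j, hprim⟩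
    have h2 := hζK.embeddingsEquivPrimitiveRoots_apply_coe ℂ hirr
      ((hζK.embeddingsEquivPrimitiveRoots ℂ hirr).symm ⟨ζ ^ j, hprim⟩)
    rw [this] at h2
    exact h2.symm
  -- powers of ζ as exponentials
  have hpow : ∀ j : ℕ, ζ ^ j = Complex.exp (((2 * Real.pi * j / n : ℝ) : ℂ) * Complex.I) := by
    intro j
    rw [hz, ← Complex.exp_nat_mul]
    congr 1
    have : (n : ℂ) ≠ 0 := by exact_mod_cast hn0
    push_cast
    field_simp
  set ηK := ζK + ζK⁻¹ with hηK
  have hζKne : ζK ≠ 0 := hζKn.ne_zero hn0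
  have hφη : ∀ (j : ℕ) (φ : K →ₐ[ℚ] ℂ), φ ζK = ζ ^ j →
      φ ηK = ((2 * Real.cos (2 * Real.pi * j / n) : ℝ) : ℂ) := by
    intro j φ hφζ
    rw [hηK, map_add, map_inv₀, hφζ, hpow j, cos_exp_eq]
  -- minpoly identification
  obtain ⟨φ₁, hφ₁⟩ := hφ 1 (Nat.coprime_one_left n)
  have hφ₁' : φ₁ ζK = ζ := by rw [hφ₁, pow_one]
  have hφ₁η : φ₁ ηK = ((2 * Real.cos (2 * Real.pi / n) : ℝ) : ℂ) := by
    have h := hφη 1 φ₁ hφ₁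
    rwa [Nat.cast_one, mul_one] at h
  have hmin : minpoly ℚ (2 * Real.cos (2 * Real.pi / n) : ℝ) = minpoly ℚ ηK := by
    have h1 : minpoly ℚ (2 * Real.cos (2 * Real.pi / n) : ℝ)
        = minpoly ℚ (((2 * Real.cos (2 * Real.pi / n) : ℝ)) : ℂ) := by
      rw [show (((2 * Real.cos (2 * Real.pi / n) : ℝ)) : ℂ)
          = algebraMap ℝ ℂ (2 * Real.cos (2 * Real.pi / n)) from rfl]
      exact (minpoly.algebraMap_eq (algebraMap ℝ ℂ).injective _).symm
    rw [h1, ← hφ₁η, minpoly.algHom_eq φ₁ φ₁.toRingHom.injective]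
  have hroots : ∀ j : ℕ, Nat.Coprime j n →
      Polynomial.aeval (2 * Real.cos (2 * Real.pi * j / n) : ℝ)
        (minpoly ℚ (2 * Real.cos (2 * Real.pi / n))) = 0 := by
    intro j hj
    obtain ⟨φ, hφζ⟩ := hφ j hj
    rw [hmin]
    apply (algebraMap ℝ ℂ).injective
    rw [map_zero, ← aeval_algebraMap_apply,
      show algebraMap ℝ ℂ (2 * Real.cos (2 * Real.pi * j / n)) =
        ((2 * Real.cos (2 * Real.pi * j / n) : ℝ) : ℂ) from rfl,
      ← hφη j φ hφζ, aeval_algHom_apply, minpoly.aeval, map_zero]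
  refine ⟨?_, hroots⟩
  -- degree computation
  haveI : FiniteDimensional ℚ K := IsCyclotomicExtension.finiteDimensional {(N : ℕ)} ℚ K
  set F : IntermediateField ℚ K := ℚ⟮ηK⟯ with hF
  have hηint : IsIntegral ℚ ηK := IsIntegral.of_finite ℚ ηK
  have hζint : IsIntegral (↥F) ζK := IsIntegral.of_finite F ζK
  have hfr1 : Module.finrank ℚ F = (minpoly ℚ ηK).natDegree := adjoin.finrank hηint
  have hηmem : ηK ∈ F := mem_adjoin_simple_self ℚ ηK
  set η' : F := ⟨ηK, hηmem⟩ with hη'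
  have hq2 : (X ^ 2 - C η' * X + 1 : Polynomial F).natDegree = 2 := by
    compute_degree!
  have hqne : (X ^ 2 - C η' * X + 1 : Polynomial F) ≠ 0 := by
    intro h
    rw [h] at hq2
    simp at hq2
  have haev : Polynomial.aeval ζK (X ^ 2 - C η' * X + 1 : Polynomial F) = 0 := by
    have halg : algebraMap F K η' = ηK := rfl
    simp only [map_add, map_sub, map_mul, map_pow, map_one, Polynomial.aeval_X,
      Polynomial.aeval_C, halg, hηK]
    rw [add_mul, inv_mul_cancel₀ hζKne]
    ring
  have hdle : (minpoly (↥F) ζK).natDegree ≤ 2 := by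
    rw [← hq2]
    exact Polynomial.natDegree_le_of_dvd (minpoly.dvd _ _ haev) hqne
  -- ζK is not in F
  have hζim : (ζ : ℂ).im ≠ 0 := by
    rw [hz, show (2 * Real.pi * Complex.I / n : ℂ)
        = ((2 * Real.pi / n : ℝ) : ℂ) * Complex.I from by push_cast; ring,
      Complex.exp_ofReal_mul_I_im]
    have hπ := Real.pi_pos
    have h1 : 0 < 2 * Real.pi / n := by positivity
    have h2 : 2 * Real.pi / n < Real.pi := by
      rw [div_lt_iff₀ (by positivity)]
      have : (3 : ℝ) ≤ n := by exact_mod_cast hn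
      nlinarith
    exact ne_of_gt (Real.sin_pos_of_pos_of_lt_pi h1 h2)
  have hnotmem : ζK ∉ (algebraMap (↥F) K).range := by
    rintro ⟨⟨y, hyF⟩, hy⟩
    have hζKF : ζK ∈ F := by
      rw [show ζK = y from hy.symm]
      exact hyF
    have hmapF : F.map φ₁ = ℚ⟮φ₁ ηK⟯ := by
      rw [hF, adjoin_map, Set.image_singleton]
    have hle : F.map φ₁ ≤ (Complex.ofRealAm.restrictScalars ℚ).fieldRange := by
      rw [hmapF, adjoin_le_iff]
      intro y hy'
      rw [Set.mem_singleton_iff] at hy'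
      subst hy'
      exact ⟨2 * Real.cos (2 * Real.pi / n), hφ₁η.symm⟩
    have hζmem : ζ ∈ (Complex.ofRealAm.restrictScalars ℚ).fieldRange :=
      hle ⟨ζK, hζKF, hφ₁'⟩
    obtain ⟨r, hr⟩ := hζmem
    apply hζim
    rw [← hr]
    exact Complex.ofReal_im r
  have hge : 2 ≤ (minpoly (↥F) ζK).natDegree :=
    (minpoly.two_le_natDegree_iff hζint).2 hnotmem
  have hdeg2 : (minpoly (↥F) ζK).natDegree = 2 := le_antisymm hdle hge
  have htop : F⟮ζK⟯ = (⊤ : IntermediateField F K) := by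
    rw [eq_top_iff]
    intro x _
    have hx : x ∈ Algebra.adjoin ℚ ({ζK} : Set K) := by
      rw [IsCyclotomicExtension.adjoin_primitive_root_eq_top hζK]
      exact Algebra.mem_top
    have h2 : x ∈ IntermediateField.adjoin ℚ ({ζK} : Set K) :=
      algebra_adjoin_le_adjoin ℚ ({ζK} : Set K) hx
    have h3 : IntermediateField.adjoin ℚ ({ζK} : Set K)
        ≤ IntermediateField.restrictScalars ℚ F⟮ζK⟯ := by
      rw [adjoin_le_iff]
      intro y hy'
      rw [Set.mem_singleton_iff] at hy'
      subst hy'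
      exact (mem_restrictScalars ℚ).2 (mem_adjoin_simple_self (↥F) ζK)
    exact (mem_restrictScalars ℚ).1 (h3 h2)
  have hfr2 : Module.finrank (↥F) K = 2 := by
    rw [← hdeg2, ← adjoin.finrank hζint, htop]
    exact finrank_top'.symm
  have hKdeg : Module.finrank ℚ K = n.totient := IsCyclotomicExtension.finrank (n := (N : ℕ)) K hirr
  have hmul := Module.finrank_mul_finrank ℚ (↥F) K
  rw [hfr1, hfr2, hKdeg] at hmul
  rw [hmin]
  exact hmul


open Real Polynomial in
/-- Let `n ≥ 3` be odd and `Ψ_n` the minimal polynomial over `ℚ` of `2·cos(2π/n)`. Then,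
over `ℝ`, `Ψ_n(s) = ∏_{1 ≤ j ≤ (n-1)/2, gcd(j,n)=1} (s - 2·cos(2πj/n))`. -/
theorem stmt_16 (n : ℕ) (hn : 3 ≤ n) (hodd : Odd n) :
    (minpoly ℚ (2 * Real.cos (2 * π / n))).map (algebraMap ℚ ℝ) =
      ∏ j ∈ (Finset.Icc 1 ((n - 1) / 2)).filter (fun j => Nat.Coprime j n),
        (X - C (2 * Real.cos (2 * π * j / n))) := by
  obtain ⟨hdeg, hroots⟩ := master n hn
  have htot : 0 < n.totient := Nat.totient_pos.2 (by omega)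
  set S := (Finset.Icc 1 ((n - 1) / 2)).filter (fun j => Nat.Coprime j n) with hS
  set p := (minpoly ℚ (2 * Real.cos (2 * π / n))).map (algebraMap ℚ ℝ) with hp
  have hint : IsIntegral ℚ (2 * Real.cos (2 * π / n)) := by
    by_contra h
    rw [minpoly.eq_zero h] at hdeg
    simp at hdeg
    omega
  have hmonic : p.Monic := (minpoly.monic hint).map (algebraMap ℚ ℝ)
  have hpne : p ≠ 0 := hmonic.ne_zero
  -- injectivity
  have hθ : ∀ j ∈ S, 2 * π * j / n ∈ Set.Icc (0:ℝ) π := by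
    intro j hj
    rw [hS, Finset.mem_filter, Finset.mem_Icc] at hj
    obtain ⟨⟨h1, h2⟩, _⟩ := hj
    have hπ := Real.pi_pos
    have hn' : (0:ℝ) < n := by positivity
    constructor
    · positivity
    · rw [div_le_iff₀ hn']
      have h2n : 2 * (j:ℝ) + 1 ≤ (n:ℝ) := by exact_mod_cast (by omega : 2*j+1 ≤ n)
      nlinarith
  have hinj : ∀ i ∈ S, ∀ j ∈ S,
      2 * Real.cos (2 * π * i / n) = 2 * Real.cos (2 * π * j / n) → i = j := by
    intro i hi j hj h
    have hcos : Real.cos (2 * π * i / n) = Real.cos (2 * π * j / n) := by linarith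
    have := Real.injOn_cos (hθ i hi) (hθ j hj) hcos
    have hπ := Real.pi_ne_zero
    have hn' : (n:ℝ) ≠ 0 := by positivity
    field_simp at this
    exact_mod_cast this
  set M : Multiset ℝ := S.val.map (fun j : ℕ => 2 * Real.cos (2 * π * j / n)) with hM
  have hnodup : M.Nodup := by
    refine S.nodup.map_on ?_
    intro i hi j hj h
    exact hinj i hi j hj h
  have hMle : M ≤ p.roots := by
    rw [Multiset.le_iff_subset hnodup]
    intro a ha
    rw [hM, Multiset.mem_map] at ha
    obtain ⟨j, hjS, rfl⟩ := ha
    have hj : Nat.Coprime j n := (Finset.mem_filter.1 (show j ∈ S from hjS)).2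
    rw [Polynomial.mem_roots hpne]
    show p.eval _ = 0
    rw [hp, Polynomial.eval_map, ← Polynomial.aeval_def]
    exact hroots j hj
  have hprodM : ∏ j ∈ S, (X - C (2 * Real.cos (2 * π * j / n)))
      = (M.map (fun a => X - C a)).prod := by
    rw [hM, Multiset.map_map, Finset.prod_eq_multiset_prod]
    rfl
  have hdvd : ∏ j ∈ S, (X - C (2 * Real.cos (2 * π * j / n))) ∣ p := by
    rw [hprodM]
    exact (Multiset.prod_dvd_prod_of_le (Multiset.map_le_map hMle)).trans
      (prod_multiset_X_sub_C_dvd p)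
  have hRmonic : (∏ j ∈ S, (X - C (2 * Real.cos (2 * π * j / n)))).Monic :=
    monic_prod_of_monic _ _ fun _ _ => monic_X_sub_C _
  have hdegR : (∏ j ∈ S, (X - C (2 * Real.cos (2 * π * j / n)))).natDegree = S.card := by
    rw [Polynomial.natDegree_prod _ _ fun j _ => X_sub_C_ne_zero _]
    simp only [Polynomial.natDegree_X_sub_C]
    simp
  have hpdeg : p.natDegree = S.card := by
    have hcard : S.card * 2 = n.totient := card_half n hn hodd
    have : p.natDegree = (minpoly ℚ (2 * Real.cos (2 * π / n))).natDegree :=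
      Polynomial.natDegree_map _
    omega
  -- conclude
  obtain ⟨c, hc⟩ := hdvd
  have hcne : c ≠ 0 := by
    rintro rfl
    rw [mul_zero] at hc
    exact hpne hc
  have hdegadd : p.natDegree
      = (∏ j ∈ S, (X - C (2 * Real.cos (2 * π * j / n)))).natDegree + c.natDegree := by
    rw [hc]
    exact Polynomial.natDegree_mul hRmonic.ne_zero hcne
  have hc0 : c.natDegree = 0 := by omega
  have hcmonic : c.Monic := by
    have h2 := hmonic
    rw [hc] at h2
    exact hRmonic.of_mul_monic_left h2
  have hc1 : c = 1 := hcmonic.natDegree_eq_zero.1 hc0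
  rw [hc, hc1, mul_one]
end

section
/- Let n ≥ 3 be an odd integer, let Φ_n denote the n-th cyclotomic polynomial, and let Ψ_n be the minimal polynomial over ℚ of 2·cos(2π/n). Then for every nonzero complex number z: Φ_n(z) = z^{φ(n)/2} · Ψ_n(z + z⁻¹), where φ is Euler's totient function. -/
open IntermediateField in
open Real Polynomial in
/-- Let `n ≥ 3` be odd, `Φ_n` the `n`-th cyclotomic polynomial and `Ψ_n` the minimal
polynomial over `ℚ` of `2·cos(2π/n)`. Then for every nonzero `z : ℂ`,
`Φ_n(z) = z^(φ(n)/2) · Ψ_n(z + z⁻¹)`. -/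
theorem stmt_17 (n : ℕ) (hn : 3 ≤ n) (hodd : Odd n) (z : ℂ) (hz : z ≠ 0) :
    (Polynomial.cyclotomic n ℂ).eval z =
      z ^ (n.totient / 2) *
        Polynomial.aeval (z + z⁻¹) (minpoly ℚ (2 * Real.cos (2 * π / n))) := by
  have hn0 : 0 < n := by omega
  set α : ℝ := 2 * Real.cos (2 * π / n) with hαdef
  set Ψ : ℚ[X] := minpoly ℚ α with hΨdef
  set d : ℕ := Ψ.natDegree with hddef
  set ξ : ℂ := Complex.exp (2 * ↑π * Complex.I / n) with hξdef
  have hξ : IsPrimitiveRoot ξ n := Complex.isPrimitiveRoot_exp n hn0.ne'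
  have hξ0 : ξ ≠ 0 := hξ.ne_zero hn0.ne'
  -- rewrite ξ as exp(θ i)
  have hθeq : (2 * ↑π * Complex.I / n : ℂ) = ((2 * π / n : ℝ) : ℂ) * Complex.I := by
    push_cast
    ring
  have h1 : ξ + ξ⁻¹ = ((α : ℝ) : ℂ) := by
    rw [hξdef, hθeq, ← Complex.exp_neg, ← neg_mul, ← Complex.two_cos, ← Complex.ofReal_cos,
      hαdef]
    push_cast
    ring
  -- α is integral over ℚ
  have hαint : IsIntegral ℚ α := by
    have hint : IsIntegral ℚ (ξ + ξ⁻¹) :=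
      ((hξ.isIntegral hn0).tower_top (A := ℚ)).add ((hξ.inv.isIntegral hn0).tower_top (A := ℚ))
    rw [h1] at hint
    exact (isIntegral_algebraMap_iff (algebraMap ℝ ℂ).injective).mp hint
  have hΨmonic : Ψ.Monic := minpoly.monic hαint
  have hdpos : 0 < d := minpoly.natDegree_pos hαint
  -- the candidate polynomial
  set P : ℚ[X] := ∑ i ∈ Finset.range (d + 1), C (Ψ.coeff i) * (X ^ 2 + 1) ^ i * X ^ (d - i)
    with hPdef
  -- evaluation identity
  have hPeval : ∀ w : ℂ, w ≠ 0 →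
      (P.map (algebraMap ℚ ℂ)).eval w
        = w ^ d * (Ψ.map (algebraMap ℚ ℂ)).eval (w + w⁻¹) := by
    intro w hw
    have hdeg : (Ψ.map (algebraMap ℚ ℂ)).natDegree < d + 1 := by
      rw [Polynomial.natDegree_map]; omega
    rw [Polynomial.eval_eq_sum_range' hdeg, hPdef, Polynomial.map_sum, Polynomial.eval_finset_sum,
      Finset.mul_sum]
    refine Finset.sum_congr rfl fun i hi => ?_
    have hi' : i ≤ d := by simpa using Nat.lt_succ_iff.mp (Finset.mem_range.mp hi)
    have key : w ^ d * (w + w⁻¹) ^ i = (w ^ 2 + 1) ^ i * w ^ (d - i) := by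
      have h2 : w * (w + w⁻¹) = w ^ 2 + 1 := by field_simp
      have h3 : w ^ d = w ^ i * w ^ (d - i) := by rw [← pow_add]; congr 1; omega
      calc w ^ d * (w + w⁻¹) ^ i = (w * (w + w⁻¹)) ^ i * w ^ (d - i) := by
            rw [mul_pow, h3]; ring
        _ = (w ^ 2 + 1) ^ i * w ^ (d - i) := by rw [h2]
    simp only [Polynomial.map_mul, Polynomial.map_pow, Polynomial.map_add, Polynomial.map_one,
      Polynomial.map_X, Polynomial.map_C, Polynomial.eval_mul, Polynomial.eval_pow,
      Polynomial.eval_add, Polynomial.eval_one, Polynomial.eval_X, Polynomial.eval_C,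
      Polynomial.coeff_map]
    rw [mul_assoc, ← key]; ring
  -- degree and monicity of P
  have hBmon : ∀ i : ℕ, ((X ^ 2 + 1 : ℚ[X]) ^ i).Monic := by
    intro i
    simpa using (Polynomial.monic_X_pow_add_C (1 : ℚ) two_ne_zero).pow i
  have hBdeg : ∀ i : ℕ, ((X ^ 2 + 1 : ℚ[X]) ^ i).natDegree = 2 * i := by
    intro i
    rw [Polynomial.natDegree_pow]
    rw [show (X ^ 2 + 1 : ℚ[X]) = X ^ 2 + C 1 by simp, Polynomial.natDegree_X_pow_add_C]
    ring
  have htdeg : ∀ i ∈ Finset.range (d + 1),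
      (C (Ψ.coeff i) * (X ^ 2 + 1) ^ i * X ^ (d - i) : ℚ[X]).natDegree ≤ d + i := by
    intro i hi
    have hi' : i ≤ d := Nat.lt_succ_iff.mp (Finset.mem_range.mp hi)
    calc (C (Ψ.coeff i) * (X ^ 2 + 1) ^ i * X ^ (d - i) : ℚ[X]).natDegree
        ≤ (C (Ψ.coeff i) * (X ^ 2 + 1) ^ i : ℚ[X]).natDegree + (X ^ (d - i) : ℚ[X]).natDegree :=
          Polynomial.natDegree_mul_le
      _ ≤ ((X ^ 2 + 1 : ℚ[X]) ^ i).natDegree + (X ^ (d - i) : ℚ[X]).natDegree := by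
          gcongr
          exact Polynomial.natDegree_C_mul_le _ _
      _ ≤ d + i := by rw [hBdeg, Polynomial.natDegree_X_pow]; omega
  have hPdegle : P.natDegree ≤ 2 * d := by
    refine Polynomial.natDegree_sum_le_of_forall_le _ _ fun i hi => ?_
    have hi' : i ≤ d := Nat.lt_succ_iff.mp (Finset.mem_range.mp hi)
    exact le_trans (htdeg i hi) (by omega)
  have hPcoeff : P.coeff (2 * d) = 1 := by
    rw [hPdef, Polynomial.finset_sum_coeff, Finset.sum_eq_single d]
    · rw [Nat.sub_self, pow_zero, mul_one, Polynomial.coeff_C_mul]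
      have : ((X ^ 2 + 1 : ℚ[X]) ^ d).coeff (2 * d) = 1 := by
        have h := (hBmon d).coeff_natDegree
        rwa [hBdeg d] at h
      rw [this, mul_one]
      exact hΨmonic.coeff_natDegree
    · intro b hb hbd
      have hb' : b ≤ d := Nat.lt_succ_iff.mp (Finset.mem_range.mp hb)
      refine Polynomial.coeff_eq_zero_of_natDegree_lt (lt_of_le_of_lt (htdeg b hb) ?_)
      omega
    · intro h
      exact absurd (Finset.self_mem_range_succ d) h
  have hPmonic : P.Monic :=
    Polynomial.monic_of_natDegree_le_of_coeff_eq_one _ hPdegle hPcoeff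
  have hPdeg : P.natDegree = 2 * d :=
    le_antisymm hPdegle (Polynomial.le_natDegree_of_ne_zero (by rw [hPcoeff]; exact one_ne_zero))
  -- ξ is a root of P
  have hΨα : Polynomial.aeval ((α : ℝ) : ℂ) Ψ = 0 := by
    rw [show ((α : ℝ) : ℂ) = algebraMap ℝ ℂ α from rfl,
      Polynomial.aeval_algebraMap_apply, minpoly.aeval, map_zero]
  have hroot : Polynomial.aeval ξ P = 0 := by
    rw [Polynomial.aeval_def, ← Polynomial.eval_map, hPeval ξ hξ0, h1]
    rw [Polynomial.aeval_def, ← Polynomial.eval_map] at hΨα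
    rw [hΨα, mul_zero]
  have hcyc : minpoly ℚ ξ = cyclotomic n ℚ := (cyclotomic_eq_minpoly_rat hξ hn0).symm
  have hdvd : cyclotomic n ℚ ∣ P := by rw [← hcyc]; exact minpoly.dvd ℚ ξ hroot
  have hle1 : n.totient ≤ 2 * d := by
    have h := Polynomial.natDegree_le_of_dvd hdvd hPmonic.ne_zero
    rwa [Polynomial.natDegree_cyclotomic, hPdeg] at h
  have hle2 : 2 * d ≤ n.totient := by
    have hξint : IsIntegral ℚ ξ := (hξ.isIntegral hn0).tower_top (A := ℚ)
    haveI : FiniteDimensional ℚ ℚ⟮ξ⟯ := IntermediateField.adjoin.finiteDimensional hξint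
    have hξE : ξ ∈ ℚ⟮ξ⟯ := IntermediateField.mem_adjoin_simple_self ℚ ξ
    set E : IntermediateField ℚ ℂ := ℚ⟮ξ⟯ with hEdef
    have hαE : ((α : ℝ) : ℂ) ∈ E := by
      rw [← h1]; exact add_mem hξE (inv_mem hξE)
    set K : IntermediateField ℚ ℂ := ℚ⟮((α : ℝ) : ℂ)⟯ with hKdef
    have hKE : K ≤ E := by
      rw [hKdef]; exact IntermediateField.adjoin_simple_le_iff.mpr hαE
    have hαint' : IsIntegral ℚ ((α : ℝ) : ℂ) := hαint.map (IsScalarTower.toAlgHom ℚ ℝ ℂ)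
    have hfrK : Module.finrank ℚ K = d := by
      rw [hKdef, IntermediateField.adjoin.finrank hαint',
        show ((α : ℝ) : ℂ) = algebraMap ℝ ℂ α from rfl,
        minpoly.algebraMap_eq (algebraMap ℝ ℂ).injective]
    have hfrE : Module.finrank ℚ E = n.totient := by
      rw [hEdef, IntermediateField.adjoin.finrank hξint, hcyc, Polynomial.natDegree_cyclotomic]
    have htow := IntermediateField.finrank_bot_mul_relfinrank hKE
    rw [hfrK, hfrE] at htow
    have h2m : 2 ≤ IntermediateField.relfinrank K E := by
      have h0 : IntermediateField.relfinrank K E ≠ 0 := by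
        intro h
        rw [h, mul_zero] at htow
        exact absurd htow.symm (Nat.totient_pos.mpr hn0).ne'
      have h1' : IntermediateField.relfinrank K E ≠ 1 := by
        intro hone
        rw [IntermediateField.relfinrank_eq_finrank_of_le hKE] at hone
        have hbot := IntermediateField.finrank_eq_one_iff.mp hone
        have hξK : ξ ∈ (⊥ : IntermediateField K ℂ) := by
          rw [← hbot]; exact hξE
        rw [IntermediateField.mem_bot] at hξK
        obtain ⟨y, hy⟩ := hξK
        have hyξ : ((y : ℂ)) = ξ := hy
        have hξKmem : ξ ∈ K := hyξ ▸ y.2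
        have hreal : K ≤ (IsScalarTower.toAlgHom ℚ ℝ ℂ).fieldRange := by
          rw [hKdef, IntermediateField.adjoin_simple_le_iff]
          exact ⟨α, rfl⟩
        obtain ⟨r, hr⟩ := hreal hξKmem
        have him : ξ.im = Real.sin (2 * π / n) := by
          rw [hξdef, hθeq]; exact Complex.exp_ofReal_mul_I_im _
        have hsin : 0 < Real.sin (2 * π / n) := by
          have hπ : 0 < π := Real.pi_pos
          have hn3 : (3 : ℝ) ≤ n := by exact_mod_cast hn
          refine Real.sin_pos_of_pos_of_lt_pi (by positivity) ?_
          rw [div_lt_iff₀ (by positivity)]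
          nlinarith
        have him0 : ξ.im = 0 := by
          rw [← hr]
          simp [IsScalarTower.coe_toAlgHom']
        rw [him0] at him
        linarith
      omega
    calc 2 * d = d * 2 := by ring
      _ ≤ d * IntermediateField.relfinrank K E := Nat.mul_le_mul_left d h2m
      _ = n.totient := htow
  have htot : n.totient = 2 * d := le_antisymm hle1 hle2
  -- conclude P = cyclotomic
  have hPeq : cyclotomic n ℚ = P := by
    obtain ⟨c, hc⟩ := hdvd
    have hcycm : (cyclotomic n ℚ).Monic := cyclotomic.monic n ℚ
    have hc0 : c ≠ 0 := by
      rintro rfl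
      rw [mul_zero] at hc
      exact hPmonic.ne_zero hc
    have hcdeg : c.natDegree = 0 := by
      have h := Polynomial.natDegree_mul hcycm.ne_zero hc0
      rw [← hc, hPdeg, Polynomial.natDegree_cyclotomic, htot] at h
      omega
    have hcC : c = C (c.coeff 0) := Polynomial.eq_C_of_natDegree_eq_zero hcdeg
    have hlead : (1 : ℚ) = c.coeff 0 := by
      have h := congrArg Polynomial.leadingCoeff hc
      rwa [hPmonic.leadingCoeff, Polynomial.leadingCoeff_mul, hcycm.leadingCoeff, one_mul,
        Polynomial.leadingCoeff, hcdeg] at h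
    rw [hc, hcC, ← hlead, map_one, mul_one]
  -- final computation
  have hfin : (cyclotomic n ℂ).eval z = (P.map (algebraMap ℚ ℂ)).eval z := by
    rw [← map_cyclotomic n (algebraMap ℚ ℂ), hPeq]
  rw [hfin, hPeval z hz, htot, Polynomial.aeval_def, ← Polynomial.eval_map]
  congr 1
  congr 1
  omega
end

section
/- Let n ≥ 3 be an odd integer and m = (n-1)/2. Then, as polynomials over ℚ, P_m(s) = ∏_{d | n, d > 1} Ψ_d(s), where P_m(s) = 1 + Σ_{j=1}^{m} 2·T_j(s/2) with T_j the j-th Chebyshev polynomial of the first kind, and Ψ_d is the minimal polynomial over ℚ of 2·cos(2π/d). -/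
open Real Polynomial

lemma hCC : (Polynomial.C (1/2:ℚ)) * 2 = 1 := by
  rw [show (2:ℚ[X]) = Polynomial.C (2:ℚ) from (map_ofNat Polynomial.C 2).symm, ← Polynomial.C_mul]
  norm_num

noncomputable def Rr (j : ℕ) : ℚ[X] := 2 * (Polynomial.Chebyshev.T ℚ j).comp (Polynomial.C (1/2 : ℚ) * Polynomial.X)

noncomputable def Pp (μ : ℕ) : ℚ[X] := 1 + ∑ j ∈ Finset.Icc 1 μ, Rr j

lemma Rr_zero : Rr 0 = 2 := by simp [Rr, Polynomial.Chebyshev.T_zero]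

lemma Rr_one : Rr 1 = X := by
  simp only [Rr, Nat.cast_one, Polynomial.Chebyshev.T_one, Polynomial.X_comp]
  linear_combination (X:ℚ[X]) * hCC

lemma Rr_add_two (j : ℕ) : Rr (j+2) = X * Rr (j+1) - Rr j := by
  unfold Rr
  rw [show (((j+2:ℕ)):ℤ) = (j:ℤ)+2 by push_cast; ring,
    Polynomial.Chebyshev.T_add_two, show ((j:ℤ)+1) = (((j+1:ℕ)):ℤ) by push_cast; ring]
  rw [Polynomial.sub_comp, Polynomial.mul_comp, Polynomial.mul_comp, Polynomial.ofNat_comp,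
    Polynomial.X_comp]
  linear_combination (2 * X * (Polynomial.Chebyshev.T ℚ ((j:ℕ)+1:ℕ)).comp (Polynomial.C (1/2:ℚ) * X) : ℚ[X]) * hCC

lemma monic_sub_aux {p q : ℚ[X]} (hp : p.Monic) (h : q.natDegree < p.natDegree) :
    (p - q).Monic ∧ (p - q).natDegree = p.natDegree := by
  have hd : q.degree < p.degree := Polynomial.degree_lt_degree h
  refine ⟨?_, Polynomial.natDegree_sub_eq_left_of_natDegree_lt h⟩
  rw [sub_eq_add_neg]
  exact hp.add_of_left (by rwa [Polynomial.degree_neg])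

lemma Rr_monic : ∀ j : ℕ, 1 ≤ j → (Rr j).Monic ∧ (Rr j).natDegree = j := by
  have key : ∀ j : ℕ, ((Rr (j+1)).Monic ∧ (Rr (j+1)).natDegree = j+1) ∧
      ((Rr (j+2)).Monic ∧ (Rr (j+2)).natDegree = j+2) := by
    intro j
    induction j with
    | zero =>
      refine ⟨⟨Rr_one ▸ Polynomial.monic_X, Rr_one ▸ Polynomial.natDegree_X⟩, ?_⟩
      rw [Rr_add_two 0, Rr_one, Rr_zero]
      have hm : (X * X : ℚ[X]).Monic := Polynomial.monic_X.mul Polynomial.monic_X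
      have hd : (X * X : ℚ[X]).natDegree = 2 := by
        rw [Polynomial.natDegree_mul Polynomial.X_ne_zero Polynomial.X_ne_zero,
          Polynomial.natDegree_X]
      have h2 : ((2:ℚ[X])).natDegree < (X*X:ℚ[X]).natDegree := by
        rw [hd, Polynomial.natDegree_ofNat]; norm_num
      obtain ⟨hmo, hde⟩ := monic_sub_aux hm h2
      exact ⟨hmo, by rw [hde, hd]⟩
    | succ k ih =>
      refine ⟨ih.2, ?_⟩
      rw [show k + 1 + 2 = (k+1) + 2 by ring, Rr_add_two (k+1)]
      have h1 := ih.2.1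
      have h2 := ih.2.2
      have hXm : (X * Rr (k+1+1)).Monic := Polynomial.monic_X.mul h1
      have hdeg : (X * Rr (k+1+1)).natDegree = k + 3 := by
        rw [Polynomial.natDegree_mul Polynomial.X_ne_zero h1.ne_zero, Polynomial.natDegree_X]
        omega
      have hlt : (Rr (k+1)).natDegree < (X * Rr (k+1+1)).natDegree := by
        rw [hdeg, ih.1.2]; omega
      obtain ⟨hmo, hde⟩ := monic_sub_aux hXm hlt
      exact ⟨hmo, by rw [hde, hdeg]⟩
  intro j hj
  obtain ⟨i, rfl⟩ : ∃ i, j = i + 1 := ⟨j - 1, by omega⟩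
  exact (key i).1

lemma Pp_monic : ∀ μ : ℕ, 1 ≤ μ → (Pp μ).Monic ∧ (Pp μ).natDegree = μ := by
  intro μ hμ
  induction μ with
  | zero => omega
  | succ k ih =>
    rcases Nat.eq_or_lt_of_le hμ with h1 | h1
    · have : Pp 1 = 1 + X := by
        unfold Pp
        rw [show Finset.Icc 1 1 = {1} from rfl, Finset.sum_singleton, Rr_one]
      rw [← h1, this]
      constructor
      · rw [add_comm]; exact Polynomial.monic_X.add_of_left (by simp [Polynomial.degree_X])
      · rw [add_comm]
        simpa using Polynomial.natDegree_X_add_C (1:ℚ)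
    · have hk : 1 ≤ k := by omega
      obtain ⟨hm, hd⟩ := ih hk
      have hPP : Pp (k+1) = Pp k + Rr (k+1) := by
        unfold Pp
        rw [Finset.sum_Icc_succ_top (by omega : 1 ≤ k+1)]
        ring
      obtain ⟨hrm, hrd⟩ := Rr_monic (k+1) (by omega)
      have hlt : (Pp k).natDegree < (Rr (k+1)).natDegree := by rw [hrd, hd]; omega
      rw [hPP, add_comm]
      have h3 : (-(Pp k)).natDegree < (Rr (k+1)).natDegree := by rwa [Polynomial.natDegree_neg]
      have h4 := monic_sub_aux hrm h3
      rw [sub_neg_eq_add] at h4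
      exact ⟨h4.1, by rw [h4.2, hrd]⟩

lemma aeval_Rr (θ : ℝ) (j : ℕ) : Polynomial.aeval (2*Real.cos θ) (Rr j) = 2 * Real.cos (j*θ) := by
  unfold Rr
  have h1 : Polynomial.aeval (2*Real.cos θ) (Polynomial.C (1/2:ℚ) * X) = Real.cos θ := by
    rw [map_mul, Polynomial.aeval_C, Polynomial.aeval_X,
      show ((algebraMap ℚ ℝ) (1/2:ℚ)) = (1/2:ℝ) by norm_num [eq_ratCast]]
    ring
  have h2 : (Polynomial.aeval (2*Real.cos θ)) (2:ℚ[X]) = (2:ℝ) := map_ofNat _ 2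
  rw [map_mul, h2, Polynomial.aeval_comp, h1, Polynomial.Chebyshev.aeval_T,
    Polynomial.Chebyshev.T_real_cos]
  norm_num

lemma sin_sum (θ : ℝ) (μ : ℕ) :
    Real.sin (θ/2) * (1 + ∑ j ∈ Finset.Icc 1 μ, 2*Real.cos (j*θ)) = Real.sin ((2*μ+1)*(θ/2)) := by
  induction μ with
  | zero => simp
  | succ k ih =>
    rw [Finset.sum_Icc_succ_top (by omega : 1 ≤ k+1)]
    have e1 : (2*((k:ℝ)+1)+1)*(θ/2) = ((k+1)*θ + θ/2) := by ring
    have e2 : (2*(k:ℝ)+1)*(θ/2) = ((k+1)*θ - θ/2) := by ring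
    push_cast
    push_cast at ih
    rw [e1]
    rw [e2] at ih
    rw [Real.sin_add]
    rw [Real.sin_sub] at ih
    nlinarith [ih]

lemma aeval_Pp (θ : ℝ) (μ : ℕ) :
    Real.sin (θ/2) * Polynomial.aeval (2*Real.cos θ) (Pp μ) = Real.sin ((2*μ+1)*(θ/2)) := by
  unfold Pp
  rw [map_add, map_one, map_sum]
  rw [← sin_sum θ μ]
  congr 1
  congr 1
  exact Finset.sum_congr rfl fun j _ => aeval_Rr θ j

lemma root_iff (d μ : ℕ) (hd : 2 ≤ d) :
    Polynomial.aeval (2*Real.cos (2*π/d)) (Pp μ) = 0 ↔ d ∣ (2*μ+1) := by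
  have hd0 : (0:ℝ) < d := by positivity
  have hsin : Real.sin ((2*π/d)/2) ≠ 0 := by
    have h1 : (2*π/d)/2 = π/d := by ring
    rw [h1]
    have : 0 < π/d := by positivity
    have h2 : π/d < π := by
      rw [div_lt_iff₀ hd0]
      nlinarith [Real.pi_pos,
        mul_le_mul_of_nonneg_left (show (2:ℝ) ≤ d by exact_mod_cast hd) Real.pi_pos.le]
    exact ne_of_gt (Real.sin_pos_of_pos_of_lt_pi this h2)
  have key := aeval_Pp (2*π/d) μ
  constructor
  · intro h
    rw [h, mul_zero] at key
    have h0 : Real.sin ((2*(μ:ℝ)+1)*((2*π/d)/2)) = 0 := key.symm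
    rw [Real.sin_eq_zero_iff] at h0
    obtain ⟨k, hk⟩ := h0
    have harg : (2*(μ:ℝ)+1)*((2*π/d)/2) = (2*μ+1)*π/d := by ring
    rw [harg] at hk
    have hdne : (d:ℝ) ≠ 0 := ne_of_gt hd0
    have h2 : (k:ℝ) * π * d = (2*μ+1)*π := by rw [hk]; field_simp
    have h3 : ((k:ℝ)*d)*π = ((2*(μ:ℝ)+1))*π := by rw [← h2]; ring
    have hkd := mul_right_cancel₀ Real.pi_ne_zero h3
    have hint : k * (d:ℤ) = 2*μ+1 := by exact_mod_cast hkd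
    have hdpos : (0:ℤ) < d := by exact_mod_cast (by omega : 0 < d)
    have hk0 : 0 ≤ k := by nlinarith [hint, hdpos]
    refine ⟨k.toNat, ?_⟩
    have hfin : (2*μ+1 : ℤ) = (d:ℤ) * (k.toNat : ℤ) := by
      rw [Int.toNat_of_nonneg hk0]; linarith [hint]
    exact_mod_cast hfin
  · rintro ⟨t, ht⟩
    have harg : (2*(μ:ℝ)+1)*((2*π/d)/2) = ((2*μ+1:ℕ):ℝ)*π/d := by push_cast; ring
    rw [harg, ht] at key
    have : ((d*t:ℕ):ℝ)*π/d = t*π := by push_cast; field_simp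
    rw [this] at key
    have h0 : Real.sin ((t:ℝ)*π) = 0 := Real.sin_int_mul_pi t
    rw [h0] at key
    exact (mul_eq_zero.mp key).resolve_left hsin
open Real Polynomial IntermediateField Module

lemma two_cos_eq (d : ℕ) :
    ((2*Real.cos (2*π/d) : ℝ) : ℂ) =
      Complex.exp (2*π*Complex.I/d) + (Complex.exp (2*π*Complex.I/d))⁻¹ := by
  have harg : (2*(π:ℂ)*Complex.I/(d:ℂ)) = ((2*π/(d:ℝ)):ℝ) * Complex.I := by
    push_cast; ring
  rw [harg, ← Complex.exp_neg, show -(((2*π/(d:ℝ)):ℝ) * Complex.I) = ((-(2*π/(d:ℝ)):ℝ):ℂ) * Complex.I by push_cast; ring,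
    Complex.exp_mul_I, Complex.exp_mul_I]
  push_cast
  rw [Complex.cos_neg, Complex.sin_neg]
  ring

set_option synthInstance.maxHeartbeats 1000000 in
set_option maxHeartbeats 2000000 in
lemma minpoly_two_cos_natDegree (d : ℕ) (hd : 3 ≤ d) :
    2 * (minpoly ℚ (2*Real.cos (2*π/d))).natDegree = d.totient := by
  have hd0 : d ≠ 0 := by omega
  set x : ℝ := 2*Real.cos (2*π/d) with hxdef
  have hmp : minpoly ℚ x = minpoly ℚ ((x:ℂ)) := by
    rw [show ((x:ℝ):ℂ) = algebraMap ℝ ℂ x from rfl, minpoly.algebraMap_eq (algebraMap ℝ ℂ).injective]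
  set ζ : ℂ := Complex.exp (2*π*Complex.I/d) with hζdef
  have hζ : IsPrimitiveRoot ζ d := Complex.isPrimitiveRoot_exp d hd0
  have hζint : IsIntegral ℚ ζ := (hζ.isIntegral (by omega)).tower_top
  have hζ0 : ζ ≠ 0 := Complex.exp_ne_zero _
  have hz : (x:ℂ) = ζ + ζ⁻¹ := two_cos_eq d
  have hζinv_eq : ζ⁻¹ = ζ^(d-1) := by
    apply inv_eq_of_mul_eq_one_right
    rw [← pow_succ', show d - 1 + 1 = d by omega]
    exact hζ.pow_eq_one
  have hζinvint : IsIntegral ℚ (ζ⁻¹) := hζinv_eq ▸ hζint.pow _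
  have hxint : IsIntegral ℚ ((x:ℂ)) := hz ▸ hζint.add hζinvint
  -- fields
  have hK : finrank ℚ ℚ⟮(x:ℂ)⟯ = (minpoly ℚ ((x:ℂ))).natDegree :=
    IntermediateField.adjoin.finrank hxint
  have hL : finrank ℚ ℚ⟮ζ⟯ = d.totient := by
    rw [IntermediateField.adjoin.finrank hζint,
      ← Polynomial.cyclotomic_eq_minpoly_rat hζ (by omega), Polynomial.natDegree_cyclotomic]
  have hζmem : ζ ∈ ℚ⟮ζ⟯ := IntermediateField.mem_adjoin_simple_self ℚ ζ
  have hxmem : (x:ℂ) ∈ ℚ⟮ζ⟯ := by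
    rw [hz]; exact add_mem hζmem (inv_mem hζmem)
  -- ζ over K
  have hζK : IsIntegral ℚ⟮(x:ℂ)⟯ ζ := hζint.tower_top
  set xK : ℚ⟮(x:ℂ)⟯ := IntermediateField.AdjoinSimple.gen ℚ ((x:ℂ)) with hxK
  have halg : algebraMap ℚ⟮(x:ℂ)⟯ ℂ xK = (x:ℂ) := rfl
  set q : Polynomial ℚ⟮(x:ℂ)⟯ := Polynomial.X^2 - Polynomial.C xK * Polynomial.X + 1 with hq
  have hqdeg : q.natDegree = 2 := by
    rw [hq]; compute_degree!
  have hq0 : q ≠ 0 := fun h => by simp [h] at hqdeg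
  have haq : Polynomial.aeval ζ q = 0 := by
    rw [hq]
    simp only [map_add, map_sub, map_mul, map_one, map_pow, Polynomial.aeval_X,
      Polynomial.aeval_C]
    rw [halg, hz]
    have h := mul_inv_cancel₀ hζ0
    linear_combination -h
  have hdvd := minpoly.dvd ℚ⟮(x:ℂ)⟯ ζ haq
  have hle : (minpoly ℚ⟮(x:ℂ)⟯ ζ).natDegree ≤ 2 := hqdeg ▸ Polynomial.natDegree_le_of_dvd hdvd hq0
  -- K is real
  have hnotmem : ζ ∉ (algebraMap ℚ⟮(x:ℂ)⟯ ℂ).range := by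
    intro hmem
    have hreal : ∀ u ∈ ℚ⟮(x:ℂ)⟯, ∃ r : ℝ, (r:ℂ) = u := by
      intro u hu
      have hle2 : ℚ⟮(x:ℂ)⟯ ≤ Subfield.toIntermediateField (K := ℚ) Complex.ofRealHom.fieldRange
          (fun q => ⟨(q:ℝ), by simp [Complex.ofRealHom_eq_coe]⟩) := by
        rw [IntermediateField.adjoin_le_iff]
        rintro y hy
        rw [Set.mem_singleton_iff] at hy
        subst hy
        exact ⟨x, rfl⟩
      obtain ⟨r, hr⟩ := hle2 hu
      exact ⟨r, hr⟩
    obtain ⟨u, hu⟩ := hmem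
    obtain ⟨r, hr⟩ := hreal ((algebraMap ℚ⟮(x:ℂ)⟯ ℂ) u) u.2
    have him : ζ.im = 0 := by rw [← hu, ← hr]; simp
    have him2 : ζ.im = Real.sin (2*π/d) := by
      rw [hζdef, show (2*(π:ℂ)*Complex.I/(d:ℂ)) = ((2*π/(d:ℝ)):ℝ) * Complex.I by push_cast; ring]
      exact Complex.exp_ofReal_mul_I_im _
    have hsinpos : 0 < Real.sin (2*π/d) := by
      apply Real.sin_pos_of_pos_of_lt_pi
      · positivity
      · rw [div_lt_iff₀ (by positivity : (0:ℝ) < d)]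
        nlinarith [Real.pi_pos, mul_le_mul_of_nonneg_left
          (show (3:ℝ) ≤ d by exact_mod_cast hd) Real.pi_pos.le]
    rw [him] at him2
    linarith
  have hge : 2 ≤ (minpoly ℚ⟮(x:ℂ)⟯ ζ).natDegree := (minpoly.two_le_natDegree_iff hζK).2 hnotmem
  have h2 : (minpoly ℚ⟮(x:ℂ)⟯ ζ).natDegree = 2 := le_antisymm hle hge
  have hL' : finrank ℚ⟮(x:ℂ)⟯ ℚ⟮(x:ℂ)⟯⟮ζ⟯ = 2 := by
    rw [IntermediateField.adjoin.finrank hζK, h2]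
  have hres : (ℚ⟮(x:ℂ)⟯⟮ζ⟯).restrictScalars ℚ = ℚ⟮ζ⟯ := by
    refine (IntermediateField.adjoin_simple_adjoin_simple (F := ℚ) (α := (x:ℂ)) ζ).trans ?_
    apply le_antisymm
    · rw [IntermediateField.adjoin_le_iff]
      rintro y hy
      rcases hy with hy | hy
      · exact hy ▸ hxmem
      · rw [Set.mem_singleton_iff] at hy; exact hy ▸ hζmem
    · exact IntermediateField.adjoin.mono ℚ _ _ (by simp)
  have htower : finrank ℚ ℚ⟮(x:ℂ)⟯ * finrank ℚ⟮(x:ℂ)⟯ ℚ⟮(x:ℂ)⟯⟮ζ⟯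
      = finrank ℚ (ℚ⟮(x:ℂ)⟯⟮ζ⟯.restrictScalars ℚ) := by
    exact Module.finrank_mul_finrank ℚ ℚ⟮(x:ℂ)⟯ ℚ⟮(x:ℂ)⟯⟮ζ⟯
  rw [hres, hL, hL', hK] at htower
  rw [hmp]
  omega

open Real Polynomial in
/-- Let `n ≥ 3` be odd and `m = (n-1)/2`. Then, as polynomials over `ℚ`,
`P_m(s) = ∏_{d ∣ n, d > 1} Ψ_d(s)`, where `P_m(s) = 1 + Σ_{j=1}^m 2·T_j(s/2)` with `T_j`
the Chebyshev polynomials of the first kind, and `Ψ_d` is the minimal polynomial over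
`ℚ` of `2·cos(2π/d)`. -/
theorem stmt_18 (n : ℕ) (hn : 3 ≤ n) (hodd : Odd n) (m : ℕ) (hm : m = (n - 1) / 2) :
    (1 : ℚ[X]) + ∑ j ∈ Finset.Icc 1 m,
        2 * (Polynomial.Chebyshev.T ℚ j).comp (Polynomial.C (1/2 : ℚ) * Polynomial.X) =
      ∏ d ∈ n.divisors.filter (fun d => 1 < d),
        minpoly ℚ (2 * Real.cos (2 * π / d)) := by
  obtain ⟨t, ht⟩ := hodd
  have hn' : n = 2*m+1 := by omega
  have hm1 : 1 ≤ m := by omega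
  have hLHS : (1 : ℚ[X]) + ∑ j ∈ Finset.Icc 1 m,
      2 * (Polynomial.Chebyshev.T ℚ j).comp (Polynomial.C (1/2 : ℚ) * Polynomial.X) = Pp m := rfl
  rw [hLHS]
  set s := n.divisors.filter (fun d => 1 < d) with hs
  set f : ℕ → ℚ[X] := fun d => minpoly ℚ (2 * Real.cos (2 * π / d)) with hf
  -- basic facts about elements of s
  have hmem : ∀ d ∈ s, d ∣ n ∧ 3 ≤ d := by
    intro d hd
    rw [hs, Finset.mem_filter, Nat.mem_divisors] at hd
    obtain ⟨⟨hdvd, _⟩, h1d⟩ := hd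
    refine ⟨hdvd, ?_⟩
    rcases Nat.even_or_odd d with he | ho
    · exfalso
      obtain ⟨u, hu⟩ := he
      have h2 : 2 ∣ n := dvd_trans ⟨u, by omega⟩ hdvd
      omega
    · obtain ⟨u, hu⟩ := ho
      omega
  have hroot : ∀ d ∈ s, Polynomial.aeval (2 * Real.cos (2 * π / d)) (Pp m) = 0 := by
    intro d hd
    obtain ⟨hdvd, hd3⟩ := hmem d hd
    exact (root_iff d m (by omega)).2 (by rw [← hn']; exact hdvd)
  have hint : ∀ d ∈ s, IsIntegral ℚ (2 * Real.cos (2 * π / d)) := by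
    intro d hd
    exact IsAlgebraic.isIntegral ⟨Pp m, (Pp_monic m hm1).1.ne_zero, hroot d hd⟩
  have hfdvd : ∀ d ∈ s, f d ∣ Pp m := fun d hd => minpoly.dvd ℚ _ (hroot d hd)
  have hfmonic : ∀ d ∈ s, (f d).Monic := fun d hd => minpoly.monic (hint d hd)
  have hfirr : ∀ d ∈ s, Irreducible (f d) := fun d hd => minpoly.irreducible (hint d hd)
  -- injectivity of d ↦ f d on s
  have hinj : ∀ d ∈ s, ∀ e ∈ s, f d = f e → d = e := by
    have key : ∀ d ∈ s, ∀ e ∈ s, f d = f e → d ∣ e := by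
      intro d hd e he hfe
      obtain ⟨hdn, hd3⟩ := hmem d hd
      obtain ⟨hen, he3⟩ := hmem e he
      have heodd : e % 2 = 1 := by
        rcases Nat.even_or_odd e with hev | ho
        · exfalso
          obtain ⟨u, hu⟩ := hev
          have h2 : 2 ∣ n := dvd_trans ⟨u, by omega⟩ hen
          omega
        · obtain ⟨u, hu⟩ := ho
          omega
      set μ := (e-1)/2 with hμ
      have hμe : 2*μ+1 = e := by omega
      have hre : Polynomial.aeval (2 * Real.cos (2 * π / e)) (Pp μ) = 0 :=
        (root_iff e μ (by omega)).2 (hμe ▸ dvd_refl e)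
      have hdvd2 : f d ∣ Pp μ := hfe ▸ minpoly.dvd ℚ _ hre
      obtain ⟨c, hc⟩ := hdvd2
      have hrd : Polynomial.aeval (2 * Real.cos (2 * π / d)) (Pp μ) = 0 := by
        rw [hc, map_mul, hf]
        simp [minpoly.aeval]
      have := (root_iff d μ (by omega)).1 hrd
      rwa [hμe] at this
    intro d hd e he hfe
    exact Nat.dvd_antisymm (key d hd e he hfe) (key e he d hd hfe.symm)
  -- pairwise coprime
  have hcop : (↑s : Set ℕ).Pairwise (Function.onFun IsCoprime f) := by
    intro a ha b hb hab
    have hnd : ¬ f a ∣ f b := by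
      intro hdvd
      have hass := (hfirr a (by exact_mod_cast ha)).associated_of_dvd
        (hfirr b (by exact_mod_cast hb)) hdvd
      have heq := Polynomial.eq_of_monic_of_associated (hfmonic a (by exact_mod_cast ha))
        (hfmonic b (by exact_mod_cast hb)) hass
      exact hab (hinj a (by exact_mod_cast ha) b (by exact_mod_cast hb) heq)
    exact ((hfirr a (by exact_mod_cast ha)).coprime_iff_not_dvd).2 hnd
  have hproddvd : (∏ d ∈ s, f d) ∣ Pp m := Finset.prod_dvd_of_coprime hcop hfdvd
  -- degrees
  have hfdeg : ∀ d ∈ s, 2 * (f d).natDegree = d.totient := by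
    intro d hd
    exact minpoly_two_cos_natDegree d (hmem d hd).2
  have hsumtot : ∑ d ∈ s, d.totient = n - 1 := by
    have h1 : n.divisors.filter (fun d => ¬ 1 < d) = {1} := by
      ext a
      simp only [Finset.mem_filter, Finset.mem_singleton, Nat.mem_divisors]
      constructor
      · rintro ⟨⟨hadvd, _⟩, ha⟩
        have := Nat.pos_of_dvd_of_pos hadvd (by omega)
        omega
      · rintro rfl
        exact ⟨⟨one_dvd n, by omega⟩, by omega⟩
    have h2 := Finset.sum_filter_add_sum_filter_not n.divisors (fun d => 1 < d) Nat.totient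
    rw [h1, Finset.sum_singleton, Nat.totient_one, ← hs] at h2
    have h3 : ∑ d ∈ n.divisors, d.totient = n := Nat.sum_totient n
    omega
  have hdegsum : ∑ d ∈ s, (f d).natDegree = m := by
    have h2 : 2 * ∑ d ∈ s, (f d).natDegree = ∑ d ∈ s, d.totient := by
      rw [Finset.mul_sum]
      exact Finset.sum_congr rfl hfdeg
    omega
  have hproddeg : (∏ d ∈ s, f d).natDegree = m := by
    rw [Polynomial.natDegree_prod s f (fun d hd => (hfmonic d hd).ne_zero)]
    exact hdegsum
  have hprodmonic : (∏ d ∈ s, f d).Monic := Polynomial.monic_prod_of_monic s f hfmonic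
  -- conclude
  obtain ⟨hPm, hPd⟩ := Pp_monic m hm1
  exact (Polynomial.eq_of_dvd_of_natDegree_le_of_leadingCoeff hproddvd
    (by rw [hproddeg, hPd]) (by rw [hprodmonic.leadingCoeff, hPm.leadingCoeff])).symm
end
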